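/- There exist constants C, d > 0 such that for all integers n, m ≥ 2, the approximate degree of the boolean function h̃_{1,n,m} associated to h_{1,n,m} satisfies adeg(h̃_{1,n,m}) ≤ C·(√n + √m)·(log₂(nm))^d. -/

import Mathlib

open Classical
open scoped ENNReal

set_option maxHeartbeats 1000000

/-! ### Deterministic decision trees -/

inductive DTree (ι σ : Type) : Type
  | leaf (b : Bool) : DTree ι σ
  | node (v : ι) (child : σ → DTree ι σ) : DTree ι σ

namespace DTree

variable {ι σ : Type}

/-- The output of the decision tree on input `x`. -/
def eval (x : ι → σ) : DTree ι σ → Bool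
  | leaf b => b
  | node v child => (child (x v)).eval x

/-- The list of variables queried by the decision tree on input `x`,
in the order they are queried. -/
def queryList (x : ι → σ) : DTree ι σ → List ι
  | leaf _ => []
  | node v child => v :: (child (x v)).queryList x

/-- The cost of the decision tree on input `x`: the number of internal nodes visited. -/
def cost (T : DTree ι σ) (x : ι → σ) : ℕ := (T.queryList x).length

/-- `T` computes `f` if it outputs `f x` on every input `x`. -/
def Computes (T : DTree ι σ) (f : (ι → σ) → Bool) : Prop := ∀ x, T.eval x = f x

end DTree

/-- Deterministic query complexity. -/
noncomputable def detComplexity {ι σ : Type} (f : (ι → σ) → Bool) : ℕ :=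
  sInf {d : ℕ | ∃ T : DTree ι σ, T.Computes f ∧ ∀ x, T.cost x ≤ d}

/-- Expected cost of a randomized decision tree (a distribution over deterministic
decision trees) on input `x`. -/
noncomputable def expCost {ι σ : Type} (μ : PMF (DTree ι σ)) (x : ι → σ) : ℝ≥0∞ :=
  ∑' T : DTree ι σ, μ T * (T.cost x : ℝ≥0∞)

/-- Zero-error (Las Vegas) randomized query complexity. -/
noncomputable def R0query {ι σ : Type} (f : (ι → σ) → Bool) : ℝ≥0∞ :=
  ⨅ μ ∈ {μ : PMF (DTree ι σ) | ∀ T ∈ μ.support, T.Computes f},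
    ⨆ x : ι → σ, expCost μ x

/-- One-sided error randomized query complexity. -/
noncomputable def R1query {ι σ : Type} (f : (ι → σ) → Bool) : ℝ≥0∞ :=
  ⨅ μ ∈ {μ : PMF (DTree ι σ) |
      (∀ x, f x = false → ∀ T ∈ μ.support, T.eval x = false) ∧
      (∀ x, f x = true → 1 / 2 ≤ ∑' T : DTree ι σ, if T.eval x = true then μ T else 0)},
    ⨆ x : ι → σ, expCost μ x

/-- Bounded-error (Monte Carlo) randomized query complexity. -/
noncomputable def Rquery {ι σ : Type} (f : (ι → σ) → Bool) : ℝ≥0∞ :=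
  ⨅ μ ∈ {μ : PMF (DTree ι σ) |
      ∀ x, 9 / 10 ≤ ∑' T : DTree ι σ, if T.eval x = f x then μ T else 0},
    ⨆ x : ι → σ, expCost μ x
/-! ### Quantum query algorithms -/

/-- The standard quantum query oracle `O_x |j,p⟩|w⟩ = |j, p + x_j mod S⟩|w⟩`,
as a matrix. -/
noncomputable def qOracle {V ω : Type} [DecidableEq V] [DecidableEq ω] {S : ℕ}
    (x : V → Fin S) : Matrix (V × Fin S × ω) (V × Fin S × ω) ℂ :=
  fun r c => if r = (c.1, c.2.1 + x c.1, c.2.2) then 1 else 0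

/-- A quantum query algorithm on inputs `x : V → Fin S`, making `queries` queries, with
workspace `Fin (W+1)`, alternating the unitaries `U 0, …, U queries` with the oracle,
and measuring with the projector `P` at the end. -/
structure QAlg (V : Type) [Fintype V] [DecidableEq V] (S : ℕ) [NeZero S] where
  queries : ℕ
  W : ℕ
  init : V
  U : ℕ → Matrix (V × Fin S × Fin (W + 1)) (V × Fin S × Fin (W + 1)) ℂ
  hU : ∀ t, (U t).conjTranspose * U t = 1 ∧ U t * (U t).conjTranspose = 1
  P : Matrix (V × Fin S × Fin (W + 1)) (V × Fin S × Fin (W + 1)) ℂ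
  hP : P.conjTranspose = P ∧ P * P = P

namespace QAlg

variable {V : Type} [Fintype V] [DecidableEq V] {S : ℕ} [NeZero S]

/-- The state of the quantum algorithm after `t` steps on input `x`. -/
noncomputable def state (A : QAlg V S) (x : V → Fin S) :
    ℕ → (V × Fin S × Fin (A.W + 1) → ℂ)
  | 0 => (A.U 0).mulVec fun r => if r = (A.init, 0, 0) then 1 else 0
  | t + 1 => (A.U (t + 1)).mulVec ((qOracle x).mulVec (A.state x t))

/-- The probability that the algorithm accepts input `x`: `‖P |Ψ_x⟩‖²`. -/
noncomputable def acceptProb (A : QAlg V S) (x : V → Fin S) : ℝ :=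
  ∑ r : V × Fin S × Fin (A.W + 1), Complex.normSq (A.P.mulVec (A.state x A.queries) r)

end QAlg

/-- Bounded-error quantum query complexity (for functions over a finite input
alphabet `σ`, identified with `Fin (card σ)` via a fixed bijection). -/
noncomputable def Qquery {V σ : Type} [Fintype V] [DecidableEq V] [Fintype σ] [Nonempty σ]
    (f : (V → σ) → Bool) : ℕ :=
  letI : NeZero (Fintype.card σ) := ⟨Fintype.card_ne_zero⟩
  sInf {t : ℕ | ∃ A : QAlg V (Fintype.card σ), A.queries = t ∧
    ∀ x : V → σ,
      (f x = true → 9 / 10 ≤ A.acceptProb fun j => Fintype.equivFin σ (x j)) ∧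
      (f x = false → A.acceptProb (fun j => Fintype.equivFin σ (x j)) ≤ 1 / 10)}

/-- Exact quantum query complexity. -/
noncomputable def QEquery {V σ : Type} [Fintype V] [DecidableEq V] [Fintype σ] [Nonempty σ]
    (f : (V → σ) → Bool) : ℕ :=
  letI : NeZero (Fintype.card σ) := ⟨Fintype.card_ne_zero⟩
  sInf {t : ℕ | ∃ A : QAlg V (Fintype.card σ), A.queries = t ∧
    ∀ x : V → σ,
      (f x = true → A.acceptProb (fun j => Fintype.equivFin σ (x j)) = 1) ∧
      (f x = false → A.acceptProb (fun j => Fintype.equivFin σ (x j)) = 0)}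

/-- Approximate degree of a boolean function. -/
noncomputable def adeg {ι : Type} (F : (ι → Bool) → Bool) : ℕ :=
  sInf {d : ℕ | ∃ p : MvPolynomial ι ℝ, p.totalDegree ≤ d ∧
    ∀ y : ι → Bool, |MvPolynomial.eval (fun i => if y i then (1 : ℝ) else 0) p -
      (if F y then 1 else 0)| ≤ 1 / 10}
/-! ### The pointer functions of Göös–Pitassi–Watson type -/

/-- A symbol of the input alphabet: a boolean value, a left pointer, a right pointer,
and a back/internal pointer (to a cell or a column, depending on `β`). -/
structure PSym (n m : ℕ) (β : Type) where
  val : Bool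
  lp : Option (Fin n × Fin m)
  rp : Option (Fin n × Fin m)
  bp : Option β
deriving DecidableEq

/-- The all-ones symbol `(1,⊥,⊥,⊥)`. -/
def PSym.one (n m : ℕ) (β : Type) : PSym n m β := ⟨true, none, none, none⟩

/-- The symbol `(0,⊥,⊥,⊥)`. -/
def PSym.zero (n m : ℕ) (β : Type) : PSym n m β := ⟨false, none, none, none⟩

def PSym.equivProd (n m : ℕ) (β : Type) :
    PSym n m β ≃ Bool × Option (Fin n × Fin m) × Option (Fin n × Fin m) × Option β where
  toFun v := (v.val, v.lp, v.rp, v.bp)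
  invFun p := ⟨p.1, p.2.1, p.2.2.1, p.2.2.2⟩
  left_inv _ := rfl
  right_inv _ := rfl

instance {n m : ℕ} {β : Type} [Fintype β] : Fintype (PSym n m β) :=
  Fintype.ofEquiv _ (PSym.equivProd n m β).symm

instance {n m : ℕ} {β : Type} : Nonempty (PSym n m β) := ⟨PSym.one n m β⟩

/-- The sequence of k bits of `j`, most significant first:  the root-to-leaf path
(`false` = left, `true` = right) of the `j`-th leaf in the complete binary tree of depth `k`. -/
def bitsPath (k j : ℕ) : List Bool :=
  ((List.range k).reverse).map fun i => j.testBit i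

/-- The root-to-leaf path of the leaf labeled `j` (0-indexed) in the balanced binary tree
with `m` leaves: the complete binary tree if `m` is a power of 2, and otherwise the complete
binary tree on `2 ^ ⌊log₂ m⌋` leaves with a pair of children added to each of the
`m - 2 ^ ⌊log₂ m⌋` leftmost leaves. -/
def treePath (m j : ℕ) : List Bool :=
  if m - 2 ^ Nat.log 2 m = 0 then bitsPath (Nat.log 2 m) j
  else if j < 2 * (m - 2 ^ Nat.log 2 m) then
    bitsPath (Nat.log 2 m) (j / 2) ++ [j % 2 == 1]
  else bitsPath (Nat.log 2 m) (j - (m - 2 ^ Nat.log 2 m))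

/-- Starting at cell `a` and following the left/right pointers of `x` as prescribed by the
list `p` of moves (`false` = left pointer, `true` = right pointer); returns `none` if a
null pointer is encountered. -/
def followPath {n m : ℕ} {β : Type} (x : Fin n × Fin m → PSym n m β)
    (a : Fin n × Fin m) (p : List Bool) : Option (Fin n × Fin m) :=
  p.foldl (fun acc b => acc.bind fun c => if b then (x c).rp else (x c).lp) (some a)

/-- The conditions for `x` to be a 1-input of `f_{n,m}`, with marked column `b` and special
element `a`: (1) `b` is the unique all-1 column; (2) `a` is the unique cell of column `b`
with `x_a ≠ (1,⊥,⊥,⊥)`; (3) for every column `j ≠ b` the tree path from `a` to the leaf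
labeled `j` exists, and ends at a cell `ℓ_j` of column `j` holding a 0; (4) the back pointer
of each `ℓ_j` points to the column `b`. -/
def fCond (n m : ℕ) (x : Fin n × Fin m → PSym n m (Fin m))
    (b : Fin m) (a : Fin n × Fin m) : Prop :=
  (∀ j : Fin m, (∀ i : Fin n, (x (i, j)).val = true) ↔ j = b) ∧
  a.2 = b ∧
  (∀ i : Fin n, x (i, b) ≠ PSym.one n m (Fin m) ↔ (i, b) = a) ∧
  ∀ j : Fin m, j ≠ b →
    ∃ ℓ : Fin n × Fin m, followPath x a (treePath m j.1) = some ℓ ∧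
      ℓ.2 = j ∧ (x ℓ).val = false ∧ (x ℓ).bp = some b

/-- The pointer function `f_{n,m}`, with back pointers to the marked column. -/
noncomputable def fFun (n m : ℕ) (x : Fin n × Fin m → PSym n m (Fin m)) : Bool :=
  if ∃ b a, fCond n m x b a then true else false

/-- The conditions for `x` to be a 1-input of `g_{n,m}`, with marked column `b` and special
element `a`: (1)–(3) as for `f_{n,m}`, and (4′) the set of columns `j ≠ b` whose highlighted
zero `ℓ_j` has back pointer to `a` has size exactly `m/2`. -/
def gCond (n m : ℕ) (x : Fin n × Fin m → PSym n m (Fin n × Fin m))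
    (b : Fin m) (a : Fin n × Fin m) : Prop :=
  (∀ j : Fin m, (∀ i : Fin n, (x (i, j)).val = true) ↔ j = b) ∧
  a.2 = b ∧
  (∀ i : Fin n, x (i, b) ≠ PSym.one n m (Fin n × Fin m) ↔ (i, b) = a) ∧
  (∀ j : Fin m, j ≠ b →
    ∃ ℓ : Fin n × Fin m, followPath x a (treePath m j.1) = some ℓ ∧
      ℓ.2 = j ∧ (x ℓ).val = false) ∧
  {j : Fin m | j ≠ b ∧ ∃ ℓ : Fin n × Fin m,
      followPath x a (treePath m j.1) = some ℓ ∧ (x ℓ).bp = some a}.ncard = m / 2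

/-- The pointer function `g_{n,m}`, where exactly `m/2` of the highlighted zeroes point
back to the special element. -/
noncomputable def gFun (n m : ℕ) (x : Fin n × Fin m → PSym n m (Fin n × Fin m)) : Bool :=
  if ∃ b a, gCond n m x b a then true else false

/-- Column `j` is good in `x` (for `g_{n,m}`): `x` is a 1-input with marked column `b ≠ j`
and special element `a`, and the highlighted zero of column `j` points back to `a`. -/
def goodColumn (n m : ℕ) (x : Fin n × Fin m → PSym n m (Fin n × Fin m)) (j : Fin m) : Prop :=
  ∃ b a, gCond n m x b a ∧ j ≠ b ∧
    ∃ ℓ : Fin n × Fin m, followPath x a (treePath m j.1) = some ℓ ∧ (x ℓ).bp = some a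

/-- The conditions for `x` to be a 1-input of `h_{k,n,m}`, with marked columns `b 0,…,b (k-1)`
and special elements `a 0,…,a (k-1)`: (1) the `b s` are exactly the all-1 columns; (2) `a s` is
the unique cell of column `b s` with `x_{a s} ≠ (1,⊥,⊥,⊥)`; (3) the internal pointers of the
`a s` form a cycle and all the `a s` have equal left pointers and equal right pointers;
(4) for every non-marked column `j` the tree path from any `a s` to the leaf labeled `j`
exists and ends at a cell `ℓ_j` of column `j` holding a 0. -/
def hCond (k n m : ℕ) (x : Fin n × Fin m → PSym n m (Fin n × Fin m))
    (b : Fin k → Fin m) (a : Fin k → Fin n × Fin m) : Prop :=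
  Function.Injective b ∧
  (∀ j : Fin m, (∀ i : Fin n, (x (i, j)).val = true) ↔ ∃ s, b s = j) ∧
  (∀ s, (a s).2 = b s) ∧
  (∀ s, ∀ i : Fin n, x (i, b s) ≠ PSym.one n m (Fin n × Fin m) ↔ (i, b s) = a s) ∧
  (∀ s : Fin k, (x (a s)).bp = some (a ⟨(s.1 + 1) % k, Nat.mod_lt _ s.pos⟩)) ∧
  (∀ s t : Fin k, (x (a s)).lp = (x (a t)).lp ∧ (x (a s)).rp = (x (a t)).rp) ∧
  ∀ j : Fin m, (∀ s, b s ≠ j) → ∀ s : Fin k,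
    ∃ ℓ : Fin n × Fin m, followPath x (a s) (treePath m j.1) = some ℓ ∧
      ℓ.2 = j ∧ (x ℓ).val = false

/-- The pointer function `h_{k,n,m}` with `k` marked columns and no back pointers. -/
noncomputable def hFun (k n m : ℕ) (x : Fin n × Fin m → PSym n m (Fin n × Fin m)) : Bool :=
  if ∃ b a, hCond k n m x b a then true else false

/-- The hard input `x^ℓ`: cell `(i,j)` holds `(0,⊥,⊥,⊥)` if `i = ℓ j` and `(1,⊥,⊥,⊥)`
otherwise. -/
def xhard (n m : ℕ) (β : Type) (ℓ : Fin m → Fin n) : Fin n × Fin m → PSym n m β :=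
  fun c => if c.1 = ℓ c.2 then PSym.zero n m β else PSym.one n m β

/-- The set of (distinct) cells queried among the first `t` queries of `T` on input `x`. -/
def queriedUpTo {ι σ : Type} [DecidableEq ι] (T : DTree ι σ) (x : ι → σ) (t : ℕ) :
    Finset ι :=
  ((T.queryList x).take t).toFinset
/-! ### The progress measure for the hard distribution `x^ℓ` -/

/-- Column `j` is compromised (for the input `x^ℓ`), given the set `Q` of queried cells:
the zero cell `(ℓ j, j)` has been queried, or more than `n/2` cells of column `j` have been
queried. -/
def compromisedCol (n m : ℕ) (ℓ : Fin m → Fin n) (Q : Finset (Fin n × Fin m))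
    (j : Fin m) : Prop :=
  (ℓ j, j) ∈ Q ∨ n < 2 * (Q.filter fun c => c.2 = j).card

/-- The progress measure `I_t = A_t + (2/n)·B_t` of the decision tree `T` on the input `x^ℓ`
after `t` queries, where `A_t` is the number of compromised columns and `B_t` is the number
of queried cells lying outside compromised columns. -/
noncomputable def Imeasure (n m : ℕ)
    (T : DTree (Fin n × Fin m) (PSym n m (Fin n × Fin m))) (ℓ : Fin m → Fin n) (t : ℕ) : ℝ :=
  ({j : Fin m |
      compromisedCol n m ℓ (queriedUpTo T (xhard n m (Fin n × Fin m) ℓ) t) j}.ncard : ℝ) +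
    (2 / n) * ({c : Fin n × Fin m | c ∈ queriedUpTo T (xhard n m (Fin n × Fin m) ℓ) t ∧
      ¬ compromisedCol n m ℓ (queriedUpTo T (xhard n m (Fin n × Fin m) ℓ) t) c.2}.ncard : ℝ)
/-! ### The balanced binary tree, via root-to-node paths -/

/-- The node set of the balanced binary tree with `m` leaves: each node is identified with
the left/right path from the root to it, so the nodes are exactly the prefixes of the
root-to-leaf paths. -/
def treeNodes (m : ℕ) : Finset (List Bool) :=
  (Finset.range m).biUnion fun j => (treePath m j).inits.toFinset

/-- The leaves of the balanced binary tree with `m` leaves. -/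
def leafNodes (m : ℕ) : Finset (List Bool) :=
  (Finset.range m).image fun j => treePath m j

/-- The internal nodes of the balanced binary tree with `m` leaves. -/
def internalNodes (m : ℕ) : Finset (List Bool) :=
  treeNodes m \ leafNodes m

/-- The subtree rooted at a node `u`: all nodes of which `u` is a prefix. -/
def subtreeOf (m : ℕ) (u : List Bool) : Finset (List Bool) :=
  (treeNodes m).filter fun w => u <+: w

/-! ### The hard distribution for `h_{1,n,m}` -/

/-- A parameter quadruple `(v, π, ℓᴸ, ℓᴺ)` for the hard distribution: a bit `v`, a map `π`
from internal tree nodes to columns, and row maps `ℓᴸ, ℓᴺ` for leaves resp. internal nodes. -/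
abbrev HardQ (n m : ℕ) : Type :=
  Bool × ({u : List Bool // u ∈ internalNodes m} → Fin m) × (Fin m → Fin n) × (Fin m → Fin n)

/-- The valid parameter quadruples: `π` injective and `ℓᴸ j ≠ ℓᴺ j` for all `j`. -/
noncomputable def hardSet (n m : ℕ) : Finset (HardQ n m) :=
  Finset.univ.filter fun q => Function.Injective q.2.1 ∧ ∀ j, q.2.2.1 j ≠ q.2.2.2 j

/-- The column of the root of the tree (`none` if the tree has no internal node). -/
noncomputable def rootCol (n m : ℕ) (q : HardQ n m) : Option (Fin m) :=
  if h : ([] : List Bool) ∈ internalNodes m then some (q.2.1 ⟨[], h⟩) else none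

/-- The cell where a child node `w` of an internal node is placed: internal nodes go to
cell `(ℓᴺ (π w), π w)`, the leaf labeled `j` goes to cell `(ℓᴸ j, j)`, and the removed leaf
(the one labeled by the root's column) yields a null pointer. -/
noncomputable def childCell (n m : ℕ) (q : HardQ n m) (w : List Bool) :
    Option (Fin n × Fin m) :=
  if h : w ∈ internalNodes m then some (q.2.2.2 (q.2.1 ⟨w, h⟩), q.2.1 ⟨w, h⟩)
  else if h2 : ∃ j : Fin m, w = treePath m j.1 ∧ some j ≠ rootCol n m q then
    some (q.2.2.1 (Classical.choose h2), Classical.choose h2)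
  else none

/-- The input of the hard distribution determined by the parameter quadruple `q`:
the internal node `u` of the tree is placed at cell `(ℓᴺ (π u), π u)` with left and right
pointers to the cells of its children, value `v` and a self-loop internal pointer if `u` is
the root, and value 0 otherwise; for `j ≠ π(root)`, the leaf labeled `j` is placed at cell
`(ℓᴸ j, j)` with value 0 and null pointers; all the remaining cells hold `(1,⊥,⊥,⊥)`. -/
noncomputable def hardInput (n m : ℕ) (q : HardQ n m) :
    Fin n × Fin m → PSym n m (Fin n × Fin m) :=
  fun c =>
    if h : ∃ u : {u : List Bool // u ∈ internalNodes m}, q.2.1 u = c.2 ∧ q.2.2.2 c.2 = c.1 then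
      { val := if (Classical.choose h).1 = [] then q.1 else false
        lp := childCell n m q ((Classical.choose h).1 ++ [false])
        rp := childCell n m q ((Classical.choose h).1 ++ [true])
        bp := if (Classical.choose h).1 = [] then some c else none }
    else if some c.2 ≠ rootCol n m q ∧ c.1 = q.2.2.1 c.2 then PSym.zero n m (Fin n × Fin m)
    else PSym.one n m (Fin n × Fin m)

/-- Column `j` directly satisfies (i) or (ii): one of the cells `(ℓᴸ j, j)`, `(ℓᴺ j, j)` has
been queried, or more than half of the cells of column `j` have been queried. -/
def colBad (n m : ℕ) (q : HardQ n m) (Q : Finset (Fin n × Fin m)) (j : Fin m) : Prop :=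
  (q.2.2.1 j, j) ∈ Q ∨ (q.2.2.2 j, j) ∈ Q ∨ n < 2 * (Q.filter fun c => c.2 = j).card

/-- Column `j` is compromised: it satisfies (i) or (ii), or some ancestor `u` of `π⁻¹(j)`
in the tree is such that column `π u` satisfies (i) or (ii). -/
def compromisedCol19 (n m : ℕ) (q : HardQ n m) (Q : Finset (Fin n × Fin m))
    (j : Fin m) : Prop :=
  colBad n m q Q j ∨
  ∃ w u : {u : List Bool // u ∈ internalNodes m}, q.2.1 w = j ∧
    u.1 <+: w.1 ∧ u.1 ≠ w.1 ∧ colBad n m q Q (q.2.1 u)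

/-- The progress measure `I_t = min{A_t + (4·C0·log₂ m / n)·B_t, m/2}` of the decision tree
`D` on the hard-distribution input given by `q` after `t` queries, where `A_t` is the number
of compromised columns and `B_t` the number of queried cells outside compromised columns. -/
noncomputable def Imeasure19 (n m : ℕ) (C0 : ℝ)
    (D : DTree (Fin n × Fin m) (PSym n m (Fin n × Fin m))) (q : HardQ n m) (t : ℕ) : ℝ :=
  min
    (({j : Fin m | compromisedCol19 n m q (queriedUpTo D (hardInput n m q) t) j}.ncard : ℝ) +
      (4 * C0 * Real.logb 2 m / n) *
        ({c : Fin n × Fin m | c ∈ queriedUpTo D (hardInput n m q) t ∧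
          ¬ compromisedCol19 n m q (queriedUpTo D (hardInput n m q) t) c.2}.ncard : ℝ))
    (m / 2)

/-! ### Auxiliary lemmas for Statement 17 -/
section S17aux
open Polynomial

namespace S17

lemma cheb_pair (z : ℝ) (hz : 1 ≤ z) :
    ∀ d : ℕ, (Polynomial.Chebyshev.T ℝ d).eval z =
      ((z + Real.sqrt (z^2-1))^d + (z - Real.sqrt (z^2-1))^d) / 2 ∧
      (Polynomial.Chebyshev.T ℝ (d+1)).eval z =
      ((z + Real.sqrt (z^2-1))^(d+1) + (z - Real.sqrt (z^2-1))^(d+1)) / 2 := by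
  have hs : Real.sqrt (z^2-1) ^ 2 = z^2 - 1 := Real.sq_sqrt (by nlinarith)
  intro d
  induction d with
  | zero =>
    refine ⟨by simp [Polynomial.Chebyshev.T_zero], by simp [Polynomial.Chebyshev.T_one]⟩
  | succ d ih =>
    refine ⟨ih.2, ?_⟩
    rw [show ((d+1:ℕ) + 1 : ℤ) = (d:ℤ) + 2 by push_cast; ring,
      Polynomial.Chebyshev.T_add_two]
    simp only [Polynomial.eval_sub, Polynomial.eval_mul, Polynomial.eval_ofNat,
      Polynomial.eval_X]
    rw [show ((d:ℤ) + 1) = ((d+1:ℕ) : ℤ) by push_cast; ring] at *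
    rw [ih.1, ih.2]
    have e1 : (z + Real.sqrt (z^2-1)) * (z - Real.sqrt (z^2-1)) = 1 := by nlinarith
    linear_combination (((z + Real.sqrt (z^2-1))^d + (z - Real.sqrt (z^2-1))^d)/2) * e1

end S17

namespace S17b
open S17 Polynomial

lemma cheb_eval_eq (z : ℝ) (hz : 1 ≤ z) (d : ℕ) :
    (Polynomial.Chebyshev.T ℝ d).eval z =
      ((z + Real.sqrt (z^2-1))^d + (z - Real.sqrt (z^2-1))^d) / 2 :=
  (cheb_pair z hz d).1

lemma cheb_ge (z : ℝ) (hz : 1 ≤ z) (d : ℕ) :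
    (z + Real.sqrt (z^2-1))^d / 2 ≤ (Polynomial.Chebyshev.T ℝ d).eval z := by
  rw [cheb_eval_eq z hz d]
  have h0 : Real.sqrt (z^2-1) ≤ z := by
    calc Real.sqrt (z^2-1) ≤ Real.sqrt (z^2) := Real.sqrt_le_sqrt (by nlinarith)
    _ = z := by rw [Real.sqrt_sq (by linarith)]
  have h1 : 0 ≤ (z - Real.sqrt (z^2-1))^d := pow_nonneg (by linarith) d
  linarith

lemma cheb_natDegree_le : ∀ d : ℕ, (Polynomial.Chebyshev.T ℝ d).natDegree ≤ d ∧
    (Polynomial.Chebyshev.T ℝ (d+1)).natDegree ≤ d+1 := by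
  intro d
  induction d with
  | zero =>
    constructor
    · simp [Polynomial.Chebyshev.T_zero]
    · simpa [Polynomial.Chebyshev.T_one] using Polynomial.natDegree_X_le
  | succ d ih =>
    refine ⟨ih.2, ?_⟩
    rw [show ((d+1:ℕ) + 1 : ℤ) = (d:ℤ) + 2 by push_cast; ring,
      Polynomial.Chebyshev.T_add_two]
    refine (Polynomial.natDegree_sub_le _ _).trans (max_le ?_ ?_)
    · refine (Polynomial.natDegree_mul_le).trans ?_
      have h2 : (2 * Polynomial.X : Polynomial ℝ).natDegree ≤ 1 := by
        refine (Polynomial.natDegree_mul_le).trans ?_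
        simpa using Polynomial.natDegree_X_le
      have := ih.2
      omega
    · exact ih.1.trans (by omega)

lemma cheb_abs_le (x : ℝ) (h1 : -1 ≤ x) (h2 : x ≤ 1) (d : ℤ) :
    |(Polynomial.Chebyshev.T ℝ d).eval x| ≤ 1 := by
  obtain ⟨θ, -, hθ⟩ := Real.surjOn_cos ⟨h1, h2⟩
  rw [← hθ, Polynomial.Chebyshev.T_real_cos]
  exact Real.abs_cos_le_one _

end S17b

namespace S17c
open S17 S17b Polynomial

lemma exists_approxAND (K : ℕ) (hK : 2 ≤ K) (ε : ℝ) (hε0 : 0 < ε) (hε1 : ε ≤ 1) :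
    ∃ q : Polynomial ℝ, (q.natDegree : ℝ) ≤ 2 * Real.sqrt K * Real.log (2 / ε) + 1 ∧
      q.eval (K : ℝ) = 1 ∧ ∀ t : ℕ, t < K → |q.eval (t : ℝ)| ≤ ε := by
  have hK1 : (1:ℝ) ≤ (K:ℝ) - 1 := by
    have : (2:ℝ) ≤ (K:ℝ) := by exact_mod_cast hK
    linarith
  have hKpos : (0:ℝ) < (K:ℝ) - 1 := by linarith
  set d : ℕ := ⌈2 * Real.sqrt K * Real.log (2 / ε)⌉₊ with hd
  set z : ℝ := 1 + ((K:ℝ) - 1)⁻¹ with hzdef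
  have hz : 1 ≤ z := by
    have : 0 < ((K:ℝ) - 1)⁻¹ := by positivity
    simp only [hzdef]; linarith
  set M : ℝ := (Polynomial.Chebyshev.T ℝ (d:ℤ)).eval z with hM
  -- lower bound on M
  have hsqK : 0 < Real.sqrt K := Real.sqrt_pos.2 (by positivity)
  set x : ℝ := (Real.sqrt K)⁻¹ with hx
  have hx0 : 0 < x := by positivity
  have hx1 : x ≤ 1 := by
    rw [hx]
    have : (1:ℝ) ≤ Real.sqrt K := by
      rw [show (1:ℝ) = Real.sqrt 1 by simp]
      exact Real.sqrt_le_sqrt (by exact_mod_cast Nat.one_le_of_lt hK)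
    exact inv_le_one_of_one_le₀ this
  have hxz : x ≤ Real.sqrt (z^2-1) := by
    have h1 : (1:ℝ)/(K:ℝ) ≤ z^2 - 1 := by
      have e1 : z^2 - 1 = ((K:ℝ)-1)⁻¹ * (z + 1) := by
        rw [hzdef]; field_simp; ring
      have h2 : (2:ℝ) ≤ z + 1 := by linarith
      have h3 : ((K:ℝ))⁻¹ ≤ ((K:ℝ)-1)⁻¹ := by
        apply inv_anti₀ hKpos; linarith
      calc (1:ℝ)/(K:ℝ) = ((K:ℝ))⁻¹ * 1 := by ring
      _ ≤ ((K:ℝ)-1)⁻¹ * (z+1) := by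
          apply mul_le_mul h3 (by linarith) one_pos.le (by positivity)
      _ = z^2 - 1 := e1.symm
    calc x = Real.sqrt (1/(K:ℝ)) := by
          rw [hx, one_div, Real.sqrt_inv]
    _ ≤ Real.sqrt (z^2-1) := Real.sqrt_le_sqrt h1
  have hw : 1 + x ≤ z + Real.sqrt (z^2-1) := by
    have : 1 ≤ z := hz
    linarith
  have hlogpos : 0 ≤ Real.log (2/ε) := Real.log_nonneg (by
    rw [le_div_iff₀ hε0]; linarith)
  have hdge : 2 * Real.sqrt K * Real.log (2 / ε) ≤ (d:ℝ) := Nat.le_ceil _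
  have hlog1x : x / 2 ≤ Real.log (1 + x) := by
    have h1 : 0 < 1 + x := by linarith
    have h2 := Real.log_le_sub_one_of_pos (show 0 < (1+x)⁻¹ by positivity)
    rw [Real.log_inv] at h2
    have h3 : x / (1 + x) ≤ Real.log (1 + x) := by
      have : (1+x)⁻¹ - 1 = -(x/(1+x)) := by field_simp; ring
      linarith
    have h4 : x / 2 ≤ x / (1+x) := by
      apply div_le_div_of_nonneg_left hx0.le h1 (by linarith)
    linarith
  have hMlow : 1/ε ≤ M := by
    have h1 : (2/ε) ≤ (1+x)^d := by
      have e1 : ((1+x):ℝ)^d = Real.exp (d * Real.log (1+x)) := by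
        rw [← Real.log_pow, Real.exp_log (by positivity)]
      rw [e1]
      have h2 : Real.log (2/ε) ≤ (d:ℝ) * (x/2) := by
        have : 2 * Real.sqrt K * Real.log (2/ε) * (x/2) = Real.log (2/ε) := by
          rw [hx]; field_simp
        nlinarith [mul_le_mul_of_nonneg_right hdge (le_of_lt (by positivity : (0:ℝ) < x/2))]
      have h3 : (d:ℝ) * (x/2) ≤ (d:ℝ) * Real.log (1+x) := by
        apply mul_le_mul_of_nonneg_left hlog1x (Nat.cast_nonneg d)
      calc (2/ε) = Real.exp (Real.log (2/ε)) := (Real.exp_log (by positivity)).symm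
      _ ≤ Real.exp ((d:ℝ) * Real.log (1+x)) := Real.exp_le_exp.2 (by linarith)
    have h2 : (1+x)^d ≤ (z + Real.sqrt (z^2-1))^d :=
      pow_le_pow_left₀ (by linarith) hw d
    have h3 := cheb_ge z hz d
    rw [← hM] at h3
    have h4 : (1:ℝ)/ε = (2/ε)/2 := by ring
    linarith
  have hMpos : 0 < M := lt_of_lt_of_le (by positivity) hMlow
  refine ⟨Polynomial.C M⁻¹ *
    ((Polynomial.Chebyshev.T ℝ (d:ℤ)).comp (Polynomial.C ((K:ℝ)-1)⁻¹ * Polynomial.X)),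
    ?_, ?_, ?_⟩
  · have h1 : (Polynomial.C M⁻¹ * ((Polynomial.Chebyshev.T ℝ (d:ℤ)).comp
        (Polynomial.C ((K:ℝ)-1)⁻¹ * Polynomial.X))).natDegree ≤ d := by
      refine (Polynomial.natDegree_C_mul_le _ _).trans ?_
      refine (Polynomial.natDegree_comp_le).trans ?_
      have h2 : (Polynomial.C ((K:ℝ)-1)⁻¹ * Polynomial.X).natDegree ≤ 1 :=
        (Polynomial.natDegree_C_mul_le _ _).trans Polynomial.natDegree_X_le
      have h3 := (cheb_natDegree_le d).1
      calc (Polynomial.Chebyshev.T ℝ (d:ℤ)).natDegree *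
            (Polynomial.C ((K:ℝ)-1)⁻¹ * Polynomial.X).natDegree ≤ d * 1 :=
          Nat.mul_le_mul h3 h2
      _ = d := by ring
    have h2 : (d:ℝ) ≤ 2 * Real.sqrt K * Real.log (2 / ε) + 1 :=
      le_of_lt (Nat.ceil_lt_add_one (by positivity))
    calc ((Polynomial.C M⁻¹ * _).natDegree : ℝ) ≤ (d:ℝ) := by exact_mod_cast h1
    _ ≤ _ := h2
  · have e1 : ((K:ℝ)-1)⁻¹ * (K:ℝ) = z := by
      rw [hzdef]; field_simp; ring
    simp only [Polynomial.eval_mul, Polynomial.eval_C, Polynomial.eval_comp,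
      Polynomial.eval_X, e1]
    rw [← hM]
    exact inv_mul_cancel₀ (ne_of_gt hMpos)
  · intro t ht
    have h1 : (t:ℝ) ≤ (K:ℝ) - 1 := by
      have : (t:ℝ) + 1 ≤ (K:ℝ) := by exact_mod_cast Nat.succ_le_of_lt ht
      linarith
    have hxt0 : (0:ℝ) ≤ ((K:ℝ)-1)⁻¹ * (t:ℝ) := by positivity
    have hxt1 : ((K:ℝ)-1)⁻¹ * (t:ℝ) ≤ 1 := by
      have h5 : ((K:ℝ)-1)⁻¹ * (t:ℝ) ≤ ((K:ℝ)-1)⁻¹ * ((K:ℝ)-1) :=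
        mul_le_mul_of_nonneg_left h1 (by positivity)
      rwa [inv_mul_cancel₀ (ne_of_gt hKpos)] at h5
    simp only [Polynomial.eval_mul, Polynomial.eval_C, Polynomial.eval_comp,
      Polynomial.eval_X]
    rw [abs_mul, abs_inv, abs_of_pos hMpos]
    have h2 := cheb_abs_le (((K:ℝ)-1)⁻¹ * (t:ℝ)) (by linarith) hxt1 (d:ℤ)
    have h3 : M⁻¹ ≤ ε := (inv_le_comm₀ hMpos hε0).2 (by rw [← one_div]; exact hMlow)
    calc M⁻¹ * |(Polynomial.Chebyshev.T ℝ (d:ℤ)).eval (((K:ℝ)-1)⁻¹ * (t:ℝ))| ≤ M⁻¹ * 1 :=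
      mul_le_mul_of_nonneg_left h2 (by positivity)
    _ = M⁻¹ := mul_one _
    _ ≤ ε := h3

end S17c

end S17aux

namespace S17d
open MvPolynomial

noncomputable def e01 {ι : Type} (y : ι → Bool) : ι → ℝ := fun i => if y i then (1:ℝ) else 0

lemma deg_one_sub_X {ι : Type} (i : ι) : (1 - X i : MvPolynomial ι ℝ).totalDegree ≤ 1 := by
  have h : (1 - X i : MvPolynomial ι ℝ) = 1 + (-1 : ℝ) • X i := by
    rw [MvPolynomial.smul_eq_C_mul, map_neg, map_one]; ring
  rw [h]
  refine (totalDegree_add _ _).trans (max_le ?_ ?_)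
  · simp [totalDegree_one]
  · exact (totalDegree_smul_le _ _).trans (by simp [totalDegree_X])

lemma exists_exact_poly {ι : Type} (s : Finset ι) (G : (ι → Bool) → Bool)
    (hG : ∀ y y' : ι → Bool, (∀ i ∈ s, y i = y' i) → G y = G y') :
    ∃ p : MvPolynomial ι ℝ, p.totalDegree ≤ s.card ∧
      ∀ y : ι → Bool, MvPolynomial.eval (e01 y) p = if G y then 1 else 0 := by
  classical
  set ext : ({i // i ∈ s} → Bool) → (ι → Bool) :=
    fun z i => if h : i ∈ s then z ⟨i, h⟩ else false with hext
  refine ⟨∑ z ∈ Finset.univ.filter (fun z : {i // i ∈ s} → Bool => G (ext z)),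
    ∏ i : {i // i ∈ s}, (if z i then X i.1 else 1 - X i.1), ?_, ?_⟩
  · refine totalDegree_finsetSum_le (fun z _ => ?_)
    refine (totalDegree_finset_prod _ _).trans ?_
    have h1 : ∀ i : {i // i ∈ s},
        ((if z i then X i.1 else 1 - X i.1 : MvPolynomial ι ℝ)).totalDegree ≤ 1 := by
      intro i
      by_cases h : z i
      · simp [h, totalDegree_X]
      · simpa [h] using deg_one_sub_X i.1
    calc ∑ i : {i // i ∈ s}, ((if z i then X i.1 else 1 - X i.1 : MvPolynomial ι ℝ)).totalDegree
        ≤ ∑ _i : {i // i ∈ s}, 1 := Finset.sum_le_sum (fun i _ => h1 i)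
    _ = s.card := by simp
  · intro y
    rw [map_sum]
    have hprod : ∀ z : {i // i ∈ s} → Bool,
        MvPolynomial.eval (e01 y) (∏ i : {i // i ∈ s}, (if z i then X i.1 else 1 - X i.1)) =
        if z = (fun i => y i.1) then 1 else 0 := by
      intro z
      rw [map_prod]
      by_cases hz : z = (fun i => y i.1)
      · rw [if_pos hz]
        apply Finset.prod_eq_one
        intro i _
        subst hz
        by_cases h : y i.1
        · simp [h, e01]
        · simp [h, e01]
      · rw [if_neg hz]
        have hex : ∃ i : {i // i ∈ s}, z i ≠ y i.1 := by
          by_contra hc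
          push_neg at hc
          exact hz (funext fun i => hc i)
        obtain ⟨i, hi⟩ := hex
        apply Finset.prod_eq_zero (Finset.mem_univ i)
        rcases Bool.eq_false_or_eq_true (z i) with hzi | hzi <;>
          rcases Bool.eq_false_or_eq_true (y i.1) with hyi | hyi <;>
          simp [hzi, hyi, e01] at hi ⊢
    have h2 : ∀ z ∈ Finset.univ.filter (fun z : {i // i ∈ s} → Bool => G (ext z) = true),
        MvPolynomial.eval (e01 y) (∏ i : {i // i ∈ s}, (if z i then X i.1 else 1 - X i.1)) =
          if z = (fun i => y i.1) then (1:ℝ) else 0 := fun z _ => hprod z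
    rw [Finset.sum_congr rfl h2,
      Finset.sum_ite_eq' _ (fun i : {i // i ∈ s} => y i.1) (fun _ => (1:ℝ))]
    have h3 : G (ext (fun i => y i.1)) = G y := by
      refine hG _ _ (fun i hi => ?_) 
      simp [hext, hi]
    by_cases hGy : G y <;> simp [Finset.mem_filter, h3, hGy]

end S17d

namespace S17e
open MvPolynomial S17d

noncomputable def Lc (n m : ℕ) : ℕ := Nat.clog 2 (Fintype.card (PSym n m (Fin n × Fin m)))

noncomputable def decode {n m : ℕ} (β : (Fin (Lc n m) → Bool) → PSym n m (Fin n × Fin m))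
    (y : (Fin n × Fin m) × Fin (Lc n m) → Bool) : (Fin n × Fin m) → PSym n m (Fin n × Fin m) :=
  fun c => β fun s => y (c, s)

lemma exists_block_poly {n m : ℕ} (β : (Fin (Lc n m) → Bool) → PSym n m (Fin n × Fin m))
    (φ : PSym n m (Fin n × Fin m) → Prop) (c : Fin n × Fin m) :
    ∃ p : MvPolynomial ((Fin n × Fin m) × Fin (Lc n m)) ℝ, p.totalDegree ≤ Lc n m ∧
      ∀ y, MvPolynomial.eval (e01 y) p = if φ (decode β y c) then 1 else 0 := by
  classical
  obtain ⟨p, h1, h2⟩ := exists_exact_poly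
    (Finset.univ.image (fun t : Fin (Lc n m) => (c, t)))
    (fun y => if φ (decode β y c) then true else false)
    (by
      intro y y' hagree
      have h : (fun s => y (c, s)) = (fun s => y' (c, s)) :=
        funext fun t => hagree (c, t) (Finset.mem_image.2 ⟨t, Finset.mem_univ _, rfl⟩)
      simp only [decode, h]
      congr)
  refine ⟨p, h1.trans ((Finset.card_image_le).trans (by simp)), fun y => ?_⟩
  rw [h2 y]
  by_cases h : φ (decode β y c) <;> simp [h]

lemma foldl_ptr_none {n m : ℕ} {γ : Type} (x : Fin n × Fin m → PSym n m γ) (l : List Bool) :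
    List.foldl (fun acc b => Option.bind acc fun c => if b then (x c).rp else (x c).lp)
      none l = none := by
  induction l with
  | nil => rfl
  | cons b l ih => simpa using ih

lemma followPath_cons_none {n m : ℕ} {γ : Type} (x : Fin n × Fin m → PSym n m γ)
    (a : Fin n × Fin m) (bb : Bool) (l : List Bool)
    (h : (if bb then (x a).rp else (x a).lp) = none) :
    followPath x a (bb :: l) = none := by
  unfold followPath
  rw [List.foldl_cons]
  have e : Option.bind (some a) (fun c => if bb then (x c).rp else (x c).lp) =
      (if bb then (x a).rp else (x a).lp) := rfl
  rw [e, h]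
  exact foldl_ptr_none x l

lemma followPath_cons_some {n m : ℕ} {γ : Type} (x : Fin n × Fin m → PSym n m γ)
    (a c : Fin n × Fin m) (bb : Bool) (l : List Bool)
    (h : (if bb then (x a).rp else (x a).lp) = some c) :
    followPath x a (bb :: l) = followPath x c l := by
  unfold followPath
  rw [List.foldl_cons]
  have e : Option.bind (some a) (fun c => if bb then (x c).rp else (x c).lp) =
      (if bb then (x a).rp else (x a).lp) := rfl
  rw [e, h]

end S17e

namespace S17e
open MvPolynomial S17d

lemma exists_path_poly {n m : ℕ} (β : (Fin (Lc n m) → Bool) → PSym n m (Fin n × Fin m))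
    (j : Fin m) (path : List Bool) :
    ∀ c : Fin n × Fin m,
    ∃ p : MvPolynomial ((Fin n × Fin m) × Fin (Lc n m)) ℝ,
      p.totalDegree ≤ (path.length + 1) * Lc n m ∧
      ∀ y, MvPolynomial.eval (e01 y) p =
        if (∃ ℓ, followPath (decode β y) c path = some ℓ ∧ ℓ.2 = j ∧
            (decode β y ℓ).val = false) then 1 else 0 := by
  induction path with
  | nil =>
    intro c
    obtain ⟨p, h1, h2⟩ := exists_block_poly β (fun v => v.val = false ∧ c.2 = j) c
    refine ⟨p, h1.trans (by simp), fun y => ?_⟩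
    rw [h2 y]
    have hiff : ((decode β y c).val = false ∧ c.2 = j) ↔
        (∃ ℓ, followPath (decode β y) c [] = some ℓ ∧ ℓ.2 = j ∧
          (decode β y ℓ).val = false) := by
      constructor
      · rintro ⟨hv, hc⟩
        exact ⟨c, rfl, hc, hv⟩
      · rintro ⟨ℓ, hℓ, hc, hv⟩
        have : c = ℓ := Option.some_injective _ hℓ
        subst this
        exact ⟨hv, hc⟩
    by_cases h : ((decode β y c).val = false ∧ c.2 = j)
    · rw [if_pos h, if_pos (hiff.1 h)]
    · rw [if_neg h, if_neg (fun hh => h (hiff.2 hh))]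
  | cons bb rest ih =>
    intro c
    choose P hPdeg hPeval using ih
    choose Q hQdeg hQeval using fun c' : Fin n × Fin m =>
      exists_block_poly β (fun v => (if bb then v.rp else v.lp) = some c') c
    refine ⟨∑ c' : Fin n × Fin m, Q c' * P c', ?_, ?_⟩
    · refine totalDegree_finsetSum_le (fun c' _ => ?_)
      refine (totalDegree_mul _ _).trans ?_
      have h1 := hQdeg c'
      have h2 := hPdeg c'
      have h3 : (bb :: rest).length = rest.length + 1 := rfl
      rw [h3]
      have : (rest.length + 1 + 1) * Lc n m = Lc n m + (rest.length + 1) * Lc n m := by ring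
      omega
    · intro y
      rw [map_sum]
      rcases hptr : (if bb then (decode β y c).rp else (decode β y c).lp) with _ | c0
      · have hz : ∀ c' ∈ (Finset.univ : Finset (Fin n × Fin m)),
            MvPolynomial.eval (e01 y) (Q c' * P c') = 0 := by
          intro c' _
          rw [map_mul, hQeval c' y, hPeval c' y, hptr]
          simp
        have hcond : ¬ (∃ ℓ, followPath (decode β y) c (bb :: rest) = some ℓ ∧ ℓ.2 = j ∧
            (decode β y ℓ).val = false) := by
          rintro ⟨ℓ, hℓ, -, -⟩
          rw [followPath_cons_none _ _ _ _ hptr] at hℓ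
          cases hℓ
        rw [Finset.sum_eq_zero hz, if_neg hcond]
      · have hs : ∑ c' : Fin n × Fin m, MvPolynomial.eval (e01 y) (Q c' * P c') =
            MvPolynomial.eval (e01 y) (Q c0 * P c0) := by
          refine Finset.sum_eq_single c0 (fun c' _ hne => ?_)
            (fun h => absurd (Finset.mem_univ c0) h)
          have hnc : ¬ (some c0 = some c') := fun h => hne (Option.some_injective _ h).symm
          rw [map_mul, hQeval c' y, hPeval c' y, hptr, if_neg hnc, zero_mul]
        rw [hs, map_mul, hQeval c0 y, hPeval c0 y, hptr, if_pos rfl, one_mul,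
          followPath_cons_some _ _ _ _ _ hptr]

end S17e

namespace S17f

def PredA (n m : ℕ) (x : Fin n × Fin m → PSym n m (Fin n × Fin m))
    (b : Fin m) (r : Fin n) (i : Fin n) : Prop :=
  if i = r then ((x (i, b)).val = true ∧ (x (i, b)).bp = some (r, b))
  else x (i, b) = PSym.one n m (Fin n × Fin m)

def PredB (n m : ℕ) (x : Fin n × Fin m → PSym n m (Fin n × Fin m))
    (b : Fin m) (r : Fin n) (j : Fin m) : Prop :=
  if j = b then True
  else ∃ ℓ, followPath x (r, b) (treePath m j.1) = some ℓ ∧ ℓ.2 = j ∧ (x ℓ).val = false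

def MyCond (n m : ℕ) (x : Fin n × Fin m → PSym n m (Fin n × Fin m))
    (b : Fin m) (r : Fin n) : Prop :=
  (∀ i, PredA n m x b r i) ∧ (∀ j, PredB n m x b r j)

variable {n m : ℕ} {x : Fin n × Fin m → PSym n m (Fin n × Fin m)}

lemma col_all_true {b : Fin m} {r : Fin n} (h : MyCond n m x b r) (i : Fin n) :
    (x (i, b)).val = true := by
  have := h.1 i
  rw [PredA] at this
  by_cases hi : i = r
  · rw [if_pos hi] at this; exact this.1
  · rw [if_neg hi] at this; rw [this]; rfl

lemma spec_bp {b : Fin m} {r : Fin n} (h : MyCond n m x b r) :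
    (x (r, b)).bp = some (r, b) := by
  have := h.1 r
  rw [PredA, if_pos rfl] at this
  exact this.2

lemma off_one {b : Fin m} {r : Fin n} (h : MyCond n m x b r) {i : Fin n} (hi : i ≠ r) :
    x (i, b) = PSym.one n m (Fin n × Fin m) := by
  have := h.1 i
  rwa [PredA, if_neg hi] at this

lemma col_exists_false {b : Fin m} {r : Fin n} (h : MyCond n m x b r) {j : Fin m}
    (hj : j ≠ b) : ∃ i : Fin n, (x (i, j)).val = false := by
  have := h.2 j
  rw [PredB, if_neg hj] at this
  obtain ⟨ℓ, -, hℓ2, hv⟩ := this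
  refine ⟨ℓ.1, ?_⟩
  have : (ℓ.1, j) = ℓ := Prod.ext rfl hℓ2.symm
  rw [this, hv]

lemma myCond_unique {b b' : Fin m} {r r' : Fin n} (h : MyCond n m x b r)
    (h' : MyCond n m x b' r') : b = b' ∧ r = r' := by
  have hbb : b = b' := by
    by_contra hbb
    obtain ⟨i, hi⟩ := col_exists_false h (fun e => hbb e.symm)
    have := col_all_true h' i
    rw [this] at hi
    exact Bool.noConfusion hi
  subst hbb
  refine ⟨rfl, ?_⟩
  by_contra hrr
  have h1 : x (r', b) = PSym.one n m (Fin n × Fin m) := off_one h (fun e => hrr e.symm)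
  have h2 := spec_bp h'
  rw [h1] at h2
  simp [PSym.one] at h2

lemma hFun_true_iff : hFun 1 n m x = true ↔ ∃ b r, MyCond n m x b r := by
  rw [hFun]
  constructor
  · intro h
    have hex : ∃ b a, hCond 1 n m x b a := by
      by_contra hc
      rw [if_neg hc] at h
      exact Bool.noConfusion h
    obtain ⟨bf, af, h1, h2, h3, h4, h5, h6, h7⟩ := hex
    set b := bf 0 with hb
    set r := (af 0).1 with hr
    have ha : af 0 = (r, b) := Prod.ext rfl (h3 0)
    refine ⟨b, r, fun i => ?_, fun j => ?_⟩
    · rw [PredA]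
      by_cases hi : i = r
      · rw [if_pos hi]
        refine ⟨(h2 b).2 ⟨0, rfl⟩ i, ?_⟩
        have h5' := h5 0
        have e : af ⟨(((0 : Fin 1)).1 + 1) % 1, Nat.mod_lt _ (Fin.pos 0)⟩ = af 0 :=
          congrArg af (Subsingleton.elim _ _)
        rw [e, ha] at h5'
        rw [hi]
        exact h5'
      · rw [if_neg hi]
        by_contra hne
        have := (h4 0 i).1 hne
        rw [ha] at this
        exact hi (congrArg Prod.fst this)
    · rw [PredB]
      by_cases hj : j = b
      · rw [if_pos hj]; trivial
      · rw [if_neg hj]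
        have h7' := h7 j (fun s => by
          rw [Subsingleton.elim s (0 : Fin 1)]
          exact fun e => hj e.symm) 0
        rwa [ha] at h7'
  · rintro ⟨b, r, hA, hB⟩
    rw [if_pos ?_]
    refine ⟨fun _ => b, fun _ => (r, b), ?_, ?_, fun s => rfl, ?_, ?_, fun s t => ⟨rfl, rfl⟩, ?_⟩
    · intro s t _; exact Subsingleton.elim s t
    · intro j
      by_cases hj : j = b
      · subst hj
        refine iff_of_true (col_all_true ⟨hA, hB⟩) ⟨0, rfl⟩
      · refine iff_of_false ?_ ?_
        · intro hall
          obtain ⟨i, hi⟩ := col_exists_false ⟨hA, hB⟩ hj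
          rw [hall i] at hi
          exact Bool.noConfusion hi
        · rintro ⟨s, hs⟩
          exact hj hs.symm
    · intro s i
      by_cases hi : i = r
      · subst hi
        refine iff_of_true ?_ rfl
        intro he
        have := spec_bp ⟨hA, hB⟩
        rw [he] at this
        simp [PSym.one] at this
      · refine iff_of_false ?_ ?_
        · exact fun hne => hne (off_one ⟨hA, hB⟩ hi)
        · intro he
          exact hi (congrArg Prod.fst he)
    · intro s
      exact spec_bp ⟨hA, hB⟩
    · intro j hne s
      have hj : j ≠ b := fun e => hne 0 e.symm
      have := hB j
      rwa [PredB, if_neg hj] at this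

end S17f

namespace S17g
open MvPolynomial S17d S17e S17f

lemma treePath_length_le (m j : ℕ) : (treePath m j).length ≤ Nat.log 2 m + 1 := by
  have hb : ∀ k j : ℕ, (bitsPath k j).length = k := by
    intro k j
    rw [bitsPath, List.length_map, List.length_reverse, List.length_range]
  rw [treePath]
  split
  · rw [hb]; omega
  · split
    · rw [List.length_append, hb]; simp
    · rw [hb]; omega

lemma totalDegree_polyAeval_le {ι : Type} (q : Polynomial ℝ) (g : MvPolynomial ι ℝ) :
    (Polynomial.aeval g q).totalDegree ≤ q.natDegree * g.totalDegree := by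
  rw [Polynomial.aeval_eq_sum_range]
  refine totalDegree_finsetSum_le (fun i hi => ?_)
  refine (totalDegree_smul_le _ _).trans ?_
  refine (totalDegree_pow _ _).trans ?_
  exact Nat.mul_le_mul_right _ (Nat.lt_succ_iff.1 (Finset.mem_range.1 hi))

lemma eval_polyAeval {ι : Type} (q : Polynomial ℝ) (g : MvPolynomial ι ℝ) (v : ι → ℝ) :
    MvPolynomial.eval v (Polynomial.aeval g q) =
      Polynomial.eval (MvPolynomial.eval v g) q := by
  rw [Polynomial.aeval_eq_sum_range, map_sum]
  conv_rhs => rw [Polynomial.eval_eq_sum_range]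
  refine Finset.sum_congr rfl (fun i _ => ?_)
  rw [MvPolynomial.smul_eq_C_mul, map_mul, MvPolynomial.eval_C, map_pow]

lemma exists_predB_poly {n m : ℕ} (β : (Fin (Lc n m) → Bool) → PSym n m (Fin n × Fin m))
    (b : Fin m) (r : Fin n) (j : Fin m) :
    ∃ p : MvPolynomial ((Fin n × Fin m) × Fin (Lc n m)) ℝ,
      p.totalDegree ≤ (Nat.log 2 m + 2) * Lc n m ∧
      ∀ y, MvPolynomial.eval (e01 y) p =
        if PredB n m (decode β y) b r j then 1 else 0 := by
  by_cases hj : j = b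
  · refine ⟨1, by simp, fun y => ?_⟩
    rw [map_one, PredB, if_pos hj]
    simp
  · obtain ⟨p, h1, h2⟩ := exists_path_poly β j (treePath m j.1) (r, b)
    refine ⟨p, h1.trans ?_, fun y => ?_⟩
    · have := treePath_length_le m j.1
      exact Nat.mul_le_mul_right _ (by omega)
    · rw [h2 y]
      have : PredB n m (decode β y) b r j ↔
          (∃ ℓ, followPath (decode β y) (r, b) (treePath m j.1) = some ℓ ∧ ℓ.2 = j ∧
            (decode β y ℓ).val = false) := by
        rw [PredB, if_neg hj]
      exact (if_congr this.symm rfl rfl)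

lemma exists_predA_poly {n m : ℕ} (β : (Fin (Lc n m) → Bool) → PSym n m (Fin n × Fin m))
    (b : Fin m) (r : Fin n) (i : Fin n) :
    ∃ p : MvPolynomial ((Fin n × Fin m) × Fin (Lc n m)) ℝ,
      p.totalDegree ≤ Lc n m ∧
      ∀ y, MvPolynomial.eval (e01 y) p =
        if PredA n m (decode β y) b r i then 1 else 0 := by
  obtain ⟨p, h1, h2⟩ := exists_block_poly β
    (fun v => if i = r then (v.val = true ∧ v.bp = some (r, b))
      else v = PSym.one n m (Fin n × Fin m)) (i, b)
  refine ⟨p, h1, fun y => ?_⟩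
  rw [h2 y]
  have e : (if i = r then ((decode β y (i, b)).val = true ∧
      (decode β y (i, b)).bp = some (r, b))
      else decode β y (i, b) = PSym.one n m (Fin n × Fin m)) ↔
      PredA n m (decode β y) b r i := by rw [PredA]
  by_cases h : PredA n m (decode β y) b r i
  · rw [if_pos (e.2 h), if_pos h]
  · rw [if_neg (fun hh => h (e.1 hh)), if_neg h]

end S17g

namespace S17h
open MvPolynomial S17c S17d S17e S17f S17g

lemma main_poly {n m : ℕ} (hn : 2 ≤ n) (hm : 2 ≤ m)
    (β : (Fin (Lc n m) → Bool) → PSym n m (Fin n × Fin m)) :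
    ∃ p : MvPolynomial ((Fin n × Fin m) × Fin (Lc n m)) ℝ,
      (p.totalDegree : ℝ) ≤ (2 * Real.sqrt ((n:ℝ) + m) * Real.log (20 * ((n:ℝ) * m)) + 1) *
        (((Nat.log 2 m + 2) * Lc n m : ℕ) : ℝ) ∧
      ∀ y, |MvPolynomial.eval (e01 y) p -
        (if hFun 1 n m (decode β y) then 1 else 0)| ≤ 1/10 := by
  have hnm4 : (4:ℝ) ≤ (n:ℝ) * m := by
    have h1 : (2:ℝ) ≤ (n:ℝ) := by exact_mod_cast hn
    have h2 : (2:ℝ) ≤ (m:ℝ) := by exact_mod_cast hm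
    nlinarith
  set ε : ℝ := 1/(10*((n:ℝ)*m)) with hε
  have hε0 : 0 < ε := by rw [hε]; positivity
  have hε1 : ε ≤ 1 := by
    rw [hε]
    rw [div_le_one (by nlinarith)]
    nlinarith
  have h2ε : 2/ε = 20*((n:ℝ)*m) := by
    rw [hε]
    field_simp
    ring
  obtain ⟨q, hq1, hqK, hqs⟩ := exists_approxAND (n+m) (by omega) ε hε0 hε1
  choose pA hA1 hA2 using fun (b : Fin m) (r : Fin n) (i : Fin n) =>
    exists_predA_poly β b r i
  choose pB hB1 hB2 using fun (b : Fin m) (r : Fin n) (j : Fin m) =>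
    exists_predB_poly β b r j
  set W : ℕ := (Nat.log 2 m + 2) * Lc n m with hW
  have hLW : Lc n m ≤ W := by
    rw [hW]
    exact Nat.le_mul_of_pos_left _ (by omega)
  set g : Fin m → Fin n → MvPolynomial ((Fin n × Fin m) × Fin (Lc n m)) ℝ :=
    fun b r => (∑ i : Fin n, pA b r i) + (∑ j : Fin m, pB b r j) with hg
  have hgdeg : ∀ b r, (g b r).totalDegree ≤ W := by
    intro b r
    rw [hg]
    refine (totalDegree_add _ _).trans (max_le ?_ ?_)
    · exact totalDegree_finsetSum_le (fun i _ => (hA1 b r i).trans hLW)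
    · exact totalDegree_finsetSum_le (fun j _ => hB1 b r j)
  set P : MvPolynomial ((Fin n × Fin m) × Fin (Lc n m)) ℝ :=
    ∑ br : Fin m × Fin n, Polynomial.aeval (g br.1 br.2) q with hP
  have hPdeg : P.totalDegree ≤ q.natDegree * W := by
    rw [hP]
    refine totalDegree_finsetSum_le (fun br _ => ?_)
    exact (totalDegree_polyAeval_le q _).trans (Nat.mul_le_mul_left _ (hgdeg _ _))
  refine ⟨P, ?_, ?_⟩
  · calc (P.totalDegree : ℝ) ≤ ((q.natDegree * W : ℕ) : ℝ) := by exact_mod_cast hPdeg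
    _ = (q.natDegree : ℝ) * (W : ℕ) := by push_cast; ring
    _ ≤ (2 * Real.sqrt ((n:ℝ) + m) * Real.log (20 * ((n:ℝ) * m)) + 1) * ((W : ℕ) : ℝ) := by
        refine mul_le_mul_of_nonneg_right ?_ (Nat.cast_nonneg _)
        have := hq1
        rw [h2ε] at this
        have hcast : Real.sqrt ((n + m : ℕ) : ℝ) = Real.sqrt ((n:ℝ) + m) := by push_cast; rfl
        rwa [hcast] at this
  · intro y
    -- counting
    set X := decode β y with hX
    have hcnt : ∀ (b : Fin m) (r : Fin n), MvPolynomial.eval (e01 y) (g b r) =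
        ((((Finset.univ.filter (fun i => PredA n m X b r i)).card
          + (Finset.univ.filter (fun j => PredB n m X b r j)).card : ℕ)) : ℝ) := by
      intro b r
      rw [hg]
      push_cast
      rw [map_add, map_sum, map_sum]
      congr 1
      · rw [Finset.sum_congr rfl (fun i _ => hA2 b r i y), Finset.sum_boole]
      · rw [Finset.sum_congr rfl (fun j _ => hB2 b r j y), Finset.sum_boole]
    have hcardA : ∀ (b : Fin m) (r : Fin n),
        (Finset.univ.filter (fun i => PredA n m X b r i)).card ≤ n := fun b r =>
      (Finset.card_filter_le _ _).trans (by simp)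
    have hcardB : ∀ (b : Fin m) (r : Fin n),
        (Finset.univ.filter (fun j => PredB n m X b r j)).card ≤ m := fun b r =>
      (Finset.card_filter_le _ _).trans (by simp)
    have hiff : ∀ (b : Fin m) (r : Fin n),
        ((Finset.univ.filter (fun i => PredA n m X b r i)).card
          + (Finset.univ.filter (fun j => PredB n m X b r j)).card = n + m)
        ↔ MyCond n m X b r := by
      intro b r
      constructor
      · intro h
        have h1 : (Finset.univ.filter (fun i => PredA n m X b r i)).card = n := by
          have := hcardA b r; have := hcardB b r; omega
        have h2 : (Finset.univ.filter (fun j => PredB n m X b r j)).card = m := by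
          have := hcardA b r; have := hcardB b r; omega
        constructor
        · intro i
          have : Finset.univ.filter (fun i => PredA n m X b r i) = Finset.univ := by
            apply Finset.eq_univ_of_card
            rw [h1]; simp
          have hmem : i ∈ Finset.univ.filter (fun i => PredA n m X b r i) := by
            rw [this]; exact Finset.mem_univ i
          exact (Finset.mem_filter.1 hmem).2
        · intro j
          have : Finset.univ.filter (fun j => PredB n m X b r j) = Finset.univ := by
            apply Finset.eq_univ_of_card
            rw [h2]; simp
          have hmem : j ∈ Finset.univ.filter (fun j => PredB n m X b r j) := by
            rw [this]; exact Finset.mem_univ j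
          exact (Finset.mem_filter.1 hmem).2
      · rintro ⟨h1, h2⟩
        have e1 : Finset.univ.filter (fun i => PredA n m X b r i) = Finset.univ :=
          Finset.filter_eq_self.2 (fun i _ => h1 i)
        have e2 : Finset.univ.filter (fun j => PredB n m X b r j) = Finset.univ :=
          Finset.filter_eq_self.2 (fun j _ => h2 j)
        rw [e1, e2]
        simp
    have hterm : ∀ (b : Fin m) (r : Fin n),
        MvPolynomial.eval (e01 y) (Polynomial.aeval (g b r) q) =
        Polynomial.eval ((((Finset.univ.filter (fun i => PredA n m X b r i)).card
          + (Finset.univ.filter (fun j => PredB n m X b r j)).card : ℕ)) : ℝ) q := by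
      intro b r
      rw [eval_polyAeval, hcnt b r]
    have htrue : ∀ (b : Fin m) (r : Fin n), MyCond n m X b r →
        MvPolynomial.eval (e01 y) (Polynomial.aeval (g b r) q) = 1 := by
      intro b r h
      rw [hterm b r, (hiff b r).2 h]
      exact_mod_cast hqK
    have hsmall : ∀ (b : Fin m) (r : Fin n), ¬ MyCond n m X b r →
        |MvPolynomial.eval (e01 y) (Polynomial.aeval (g b r) q)| ≤ ε := by
      intro b r h
      rw [hterm b r]
      refine hqs _ ?_
      have h1 := hcardA b r
      have h2 := hcardB b r
      have h3 : ¬ ((Finset.univ.filter (fun i => PredA n m X b r i)).card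
          + (Finset.univ.filter (fun j => PredB n m X b r j)).card = n + m) :=
        fun hc => h ((hiff b r).1 hc)
      omega
    have hPeval : MvPolynomial.eval (e01 y) P =
        ∑ br : Fin m × Fin n, MvPolynomial.eval (e01 y) (Polynomial.aeval (g br.1 br.2) q) := by
      rw [hP, map_sum]
    have hcard_univ : (Finset.univ : Finset (Fin m × Fin n)).card = m * n := by
      simp
    have hmne : ((m:ℝ) * n) * ε = 1/10 := by
      rw [hε]
      field_simp
    by_cases hF : hFun 1 n m X = true
    · obtain ⟨b0, r0, hMy⟩ := hFun_true_iff.1 hF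
      have huniq : ∀ br : Fin m × Fin n, br ≠ (b0, r0) → ¬ MyCond n m X br.1 br.2 := by
        intro br hne hMy'
        obtain ⟨e1, e2⟩ := myCond_unique hMy' hMy
        exact hne (Prod.ext e1 e2)
      rw [hPeval, ← Finset.sum_erase_add _ _ (Finset.mem_univ (b0, r0))]
      rw [htrue b0 r0 hMy, hF, if_pos rfl]
      rw [add_sub_cancel_right]
      have hbnd : |∑ br ∈ Finset.univ.erase (b0, r0),
          MvPolynomial.eval (e01 y) (Polynomial.aeval (g br.1 br.2) q)| ≤
          ((Finset.univ.erase (b0, r0)).card : ℝ) * ε := by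
        refine (Finset.abs_sum_le_sum_abs _ _).trans ?_
        have := Finset.sum_le_card_nsmul (Finset.univ.erase (b0, r0))
          (fun br => |MvPolynomial.eval (e01 y) (Polynomial.aeval (g br.1 br.2) q)|) ε
          (fun br hbr => hsmall br.1 br.2 (huniq br (Finset.ne_of_mem_erase hbr)))
        rwa [nsmul_eq_mul] at this
      refine hbnd.trans ?_
      have hcle : ((Finset.univ.erase (b0, r0)).card : ℝ) ≤ (m*n : ℝ) := by
        have h1 : (Finset.univ.erase (b0, r0)).card ≤ (Finset.univ : Finset (Fin m × Fin n)).card :=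
          Finset.card_le_card (Finset.erase_subset _ _)
        rw [hcard_univ] at h1
        exact_mod_cast h1
      calc ((Finset.univ.erase (b0, r0)).card : ℝ) * ε ≤ ((m:ℝ)*n) * ε :=
        mul_le_mul_of_nonneg_right hcle hε0.le
      _ = 1/10 := hmne
    · have hF' : hFun 1 n m X = false := by
        cases hFb : hFun 1 n m X
        · rfl
        · exact absurd hFb hF
      have hallsmall : ∀ br : Fin m × Fin n, ¬ MyCond n m X br.1 br.2 := by
        intro br hMy'
        exact hF (hFun_true_iff.2 ⟨br.1, br.2, hMy'⟩)
      rw [hPeval, hF', if_neg (by simp), sub_zero]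
      have hbnd : |∑ br : Fin m × Fin n,
          MvPolynomial.eval (e01 y) (Polynomial.aeval (g br.1 br.2) q)| ≤
          ((Finset.univ : Finset (Fin m × Fin n)).card : ℝ) * ε := by
        refine (Finset.abs_sum_le_sum_abs _ _).trans ?_
        have := Finset.sum_le_card_nsmul (Finset.univ : Finset (Fin m × Fin n))
          (fun br => |MvPolynomial.eval (e01 y) (Polynomial.aeval (g br.1 br.2) q)|) ε
          (fun br _ => hsmall br.1 br.2 (hallsmall br))
        rwa [nsmul_eq_mul] at this
      refine hbnd.trans (le_of_eq ?_)
      rw [hcard_univ]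
      push_cast
      exact hmne

end S17h

/-- The approximate degree of the booleanization of `h_{1,n,m}` is
`Õ(√n + √m)`. -/
theorem statement17 :
    ∃ C d : ℝ, 0 < C ∧ 0 < d ∧ ∀ n m : ℕ, 2 ≤ n → 2 ≤ m →
      ∀ β : (Fin (Nat.clog 2 (Fintype.card (PSym n m (Fin n × Fin m)))) → Bool) →
          PSym n m (Fin n × Fin m),
        Function.Surjective β →
        (adeg (fun y : (Fin n × Fin m) ×
              Fin (Nat.clog 2 (Fintype.card (PSym n m (Fin n × Fin m)))) → Bool =>
            hFun 1 n m fun c => β fun s => y (c, s)) : ℝ) ≤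
          C * (Real.sqrt n + Real.sqrt m) * Real.logb 2 ((n : ℝ) * m) ^ d := by
  refine ⟨500, 3, by norm_num, by norm_num, ?_⟩
  intro n m hn hm β hβ
  clear hβ
  have hn1 : (1:ℝ) ≤ (n:ℝ) := by exact_mod_cast Nat.one_le_of_lt hn
  have hm1 : (1:ℝ) ≤ (m:ℝ) := by exact_mod_cast Nat.one_le_of_lt hm
  have hnm4 : (4:ℝ) ≤ (n:ℝ) * m := by
    have h1 : (2:ℝ) ≤ (n:ℝ) := by exact_mod_cast hn
    have h2 : (2:ℝ) ≤ (m:ℝ) := by exact_mod_cast hm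
    nlinarith
  have hnmpos : (0:ℝ) < (n:ℝ) * m := by linarith
  have hlog2pos : (0:ℝ) < Real.log 2 := Real.log_pos (by norm_num)
  set G : ℝ := Real.logb 2 ((n:ℝ) * m) with hGdef
  have hlognm : Real.log 4 ≤ Real.log ((n:ℝ)*m) := Real.log_le_log (by norm_num) hnm4
  have hlog4 : Real.log 4 = 2 * Real.log 2 := by
    rw [show (4:ℝ) = 2^(2:ℕ) by norm_num, Real.log_pow]
    push_cast; ring
  have hG2 : 2 ≤ G := by
    rw [hGdef, Real.logb, le_div_iff₀ hlog2pos]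
    rw [hlog4] at hlognm
    linarith
  have hGpos : 0 < G := by linarith
  have hGlog : G * Real.log 2 = Real.log ((n:ℝ)*m) := by
    rw [hGdef, Real.logb]
    field_simp
  -- the polynomial
  obtain ⟨p, hdeg, happ⟩ := S17h.main_poly hn hm β
  have hadeg : adeg (fun y : (Fin n × Fin m) ×
      Fin (Nat.clog 2 (Fintype.card (PSym n m (Fin n × Fin m)))) → Bool =>
        hFun 1 n m fun c => β fun s => y (c, s)) ≤ p.totalDegree := by
    apply Nat.sInf_le
    exact ⟨p, le_rfl, fun y => happ y⟩
  -- numeric bounds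
  have hsq1 : (1:ℝ) ≤ Real.sqrt n := by
    rw [show (1:ℝ) = Real.sqrt 1 by simp]
    exact Real.sqrt_le_sqrt hn1
  have hsqm0 : (0:ℝ) ≤ Real.sqrt m := Real.sqrt_nonneg _
  have hsqnm : Real.sqrt ((n:ℝ) + m) ≤ Real.sqrt n + Real.sqrt m := by
    have h := Real.sqrt_le_sqrt (show (n:ℝ) + m ≤ (Real.sqrt n + Real.sqrt m)^2 by
      have hn' := Real.sq_sqrt (show (0:ℝ) ≤ (n:ℝ) by positivity)
      have hm' := Real.sq_sqrt (show (0:ℝ) ≤ (m:ℝ) by positivity)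
      nlinarith [Real.sqrt_nonneg (n:ℝ), Real.sqrt_nonneg (m:ℝ)])
    rwa [Real.sqrt_sq (by positivity)] at h
  have hlog20 : Real.log (20 * ((n:ℝ) * m)) ≤ 11 * G := by
    rw [Real.log_mul (by norm_num) (ne_of_gt hnmpos)]
    have h1 : Real.log 20 ≤ 19 := by
      have := Real.log_le_sub_one_of_pos (show (0:ℝ) < 20 by norm_num)
      linarith
    have h2 : (1.38:ℝ) ≤ Real.log ((n:ℝ)*m) := by
      have := Real.log_two_gt_d9
      rw [hlog4] at hlognm
      linarith
    have h3 : Real.log ((n:ℝ)*m) ≤ 0.6931471808 * G := by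
      have := Real.log_two_lt_d9
      nlinarith [hGpos]
    nlinarith
  have hlog20pos : 0 ≤ Real.log (20 * ((n:ℝ) * m)) := Real.log_nonneg (by nlinarith)
  have hq' : 2 * Real.sqrt ((n:ℝ) + m) * Real.log (20 * ((n:ℝ) * m)) + 1 ≤
      23 * ((Real.sqrt n + Real.sqrt m) * G) := by
    have h1 : 2 * Real.sqrt ((n:ℝ) + m) * Real.log (20 * ((n:ℝ) * m)) ≤
        2 * ((Real.sqrt n + Real.sqrt m) * (11 * G)) := by
      have := mul_le_mul hsqnm hlog20 hlog20pos (by positivity)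
      nlinarith [Real.sqrt_nonneg ((n:ℝ)+m)]
    have h2 : (1:ℝ) ≤ (Real.sqrt n + Real.sqrt m) * G := by nlinarith
    nlinarith
  -- bound on Lc
  have hcard : Fintype.card (PSym n m (Fin n × Fin m)) =
      2 * ((n*m+1) * ((n*m+1) * (n*m+1))) := by
    rw [Fintype.card_congr (PSym.equivProd n m (Fin n × Fin m))]
    simp [Fintype.card_option]
  set t : ℕ := Nat.log 2 (n*m) with ht
  have h1 : n*m + 1 ≤ 2^(t+1) := Nat.lt_pow_succ_log_self (by norm_num) (n*m)
  have hLc : S17e.Lc n m ≤ 4*(t+1) := by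
    have h2 : Fintype.card (PSym n m (Fin n × Fin m)) ≤ 2^(4*(t+1)) := by
      rw [hcard]
      have h1' : 2 ≤ 2^(t+1) := by
        calc 2 = 2^1 := (pow_one 2).symm
        _ ≤ 2^(t+1) := Nat.pow_le_pow_right (by norm_num) (Nat.succ_le_succ (Nat.zero_le t))
      have h3 : 2 * ((n*m+1) * ((n*m+1) * (n*m+1))) ≤
          2^(t+1) * (2^(t+1) * (2^(t+1) * 2^(t+1))) :=
        Nat.mul_le_mul h1' (Nat.mul_le_mul h1 (Nat.mul_le_mul h1 h1))
      have h4 : 2^(t+1) * (2^(t+1) * (2^(t+1) * 2^(t+1))) = 2^(4*(t+1)) := by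
        rw [← pow_add, ← pow_add, ← pow_add]
        congr 1
        ring
      exact le_trans h3 (le_of_eq h4)
    exact (Nat.clog_le_iff_le_pow (by norm_num)).2 h2
  have htG : (t:ℝ) ≤ G := by
    have h2 := Real.natLog_le_logb (n*m) 2
    rw [hGdef]
    rw [← ht] at h2
    have : ((n*m : ℕ):ℝ) = (n:ℝ)*m := by push_cast; ring
    rwa [this] at h2
  have hLcr : ((S17e.Lc n m : ℕ) : ℝ) ≤ 6 * G := by
    have h2 : ((S17e.Lc n m : ℕ) : ℝ) ≤ 4*((t:ℝ)+1) := by exact_mod_cast hLc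
    have h3 : 4*((t:ℝ)+1) ≤ 4*(G+1) := by linarith
    linarith
  have hlogmG : ((Nat.log 2 m : ℕ) : ℝ) ≤ G := by
    have h2 := Real.natLog_le_logb m 2
    push_cast at h2
    have h3 : Real.logb 2 (m:ℝ) ≤ G := by
      rw [hGdef, Real.logb, Real.logb]
      have h4 : Real.log (m:ℝ) ≤ Real.log ((n:ℝ)*m) :=
        Real.log_le_log (by linarith) (by nlinarith)
      exact div_le_div_of_nonneg_right h4 hlog2pos.le
    exact h2.trans h3
  have hWr : (((Nat.log 2 m + 2) * S17e.Lc n m : ℕ) : ℝ) ≤ 18 * G^2 := by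
    push_cast
    have h2 : ((Nat.log 2 m : ℕ):ℝ) + 2 ≤ 2*G := by
      have := hlogmG; linarith
    calc (((Nat.log 2 m : ℕ):ℝ) + 2) * ((S17e.Lc n m : ℕ) : ℝ) ≤ (2*G) * (6*G) := by
          refine mul_le_mul h2 hLcr (by positivity) (by positivity)
    _ ≤ 18 * G^2 := by nlinarith
  -- final chain
  have hrpow : G ^ (3:ℝ) = G^(3:ℕ) := by
    rw [show (3:ℝ) = ((3:ℕ):ℝ) by norm_num, Real.rpow_natCast]
  calc (↑(adeg (fun y : (Fin n × Fin m) ×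
        Fin (Nat.clog 2 (Fintype.card (PSym n m (Fin n × Fin m)))) → Bool =>
          hFun 1 n m fun c => β fun s => y (c, s))) : ℝ) ≤ (p.totalDegree : ℝ) := by
        exact_mod_cast hadeg
  _ ≤ (2 * Real.sqrt ((n:ℝ) + m) * Real.log (20 * ((n:ℝ) * m)) + 1) *
        (((Nat.log 2 m + 2) * S17e.Lc n m : ℕ) : ℝ) := hdeg
  _ ≤ (23 * ((Real.sqrt n + Real.sqrt m) * G)) * (18 * G^2) := by
        refine mul_le_mul hq' hWr (Nat.cast_nonneg _) (by positivity)
  _ ≤ 500 * (Real.sqrt n + Real.sqrt m) * G ^ (3:ℝ) := by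
        rw [hrpow]
        have hS : 0 ≤ (Real.sqrt (n:ℝ) + Real.sqrt (m:ℝ)) * G^(3:ℕ) := by positivity
        calc 23 * ((Real.sqrt (n:ℝ) + Real.sqrt (m:ℝ)) * G) * (18 * G^2)
            = 414 * ((Real.sqrt (n:ℝ) + Real.sqrt (m:ℝ)) * G^(3:ℕ)) := by ring
        _ ≤ 500 * ((Real.sqrt (n:ℝ) + Real.sqrt (m:ℝ)) * G^(3:ℕ)) := by nlinarith [hS]
        _ = 500 * (Real.sqrt (n:ℝ) + Real.sqrt (m:ℝ)) * G^(3:ℕ) := by ring
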